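/- Let n ≥ 2 and let Q : Matrix (Fin (n+1)) (Fin (n+1)) ℂ be the adjacency matrix of the graph DL̃_n: Q i j = 1 (and Q j i = 1) exactly when the unordered pair {i, j} (of natural-number values) is {0, 2}, {1, 2}, or {k, k+1} for some 2 ≤ k ≤ n−1; Q n n = 1 (a loop at vertex n); and all other entries are 0. Then spectralRadius ℂ Q = 2. -/

import Mathlib

open Matrix
open Finset

lemma sum_ite_fin {n : ℕ} (a : ℕ) (ha : a < n + 1) (c : ℝ) :
    ∑ j : Fin (n + 1), (if (j : ℕ) = a then c else 0) = c := by
  have h : ∀ j : Fin (n + 1), (if (j : ℕ) = a then c else 0)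
      = (if j = (⟨a, ha⟩ : Fin (n + 1)) then c else 0) := by
    intro j; simp [Fin.ext_iff]
  rw [Finset.sum_congr rfl fun j _ => h j]
  simp

lemma key (n : ℕ) (hn : 2 ≤ n) (i : Fin (n + 1)) :
    ∑ j : Fin (n + 1),
      (if (i.val = 0 ∧ j.val = 2) ∨ (j.val = 0 ∧ i.val = 2) ∨
          (i.val = 1 ∧ j.val = 2) ∨ (j.val = 1 ∧ i.val = 2) ∨
          (2 ≤ i.val ∧ j.val = i.val + 1) ∨ (2 ≤ j.val ∧ i.val = j.val + 1) ∨
          (i = j ∧ i.val = n) then (1:ℝ) else 0) * (if (j : ℕ) ≤ 1 then 1 else 2)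
      = 2 * (if (i : ℕ) ≤ 1 then 1 else 2) := by
  have hi := i.isLt
  rcases lt_or_ge i.val 2 with h | h
  · rw [if_pos (by omega : (i:ℕ) ≤ 1)]
    have hp : ∀ j : Fin (n + 1), (if (i.val = 0 ∧ j.val = 2) ∨ (j.val = 0 ∧ i.val = 2) ∨
              (i.val = 1 ∧ j.val = 2) ∨ (j.val = 1 ∧ i.val = 2) ∨
              (2 ≤ i.val ∧ j.val = i.val + 1) ∨ (2 ≤ j.val ∧ i.val = j.val + 1) ∨
              (i = j ∧ i.val = n) then (1:ℝ) else 0) * (if (j : ℕ) ≤ 1 then 1 else 2) = (if (j : ℕ) = 2 then (2:ℝ) else 0) := fun j => by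
      have hj := j.isLt
      simp only [Fin.ext_iff]
      split_ifs <;> (try norm_num) <;> omega
    rw [Finset.sum_congr rfl fun j _ => hp j, sum_ite_fin 2 (by omega)]
    norm_num
  · rw [if_neg (by omega : ¬ (i:ℕ) ≤ 1)]
    rcases eq_or_lt_of_le h with h2 | h2
    · by_cases hn2 : n = 2
      · -- i = 2 = n
        have hp : ∀ j : Fin (n + 1), (if (i.val = 0 ∧ j.val = 2) ∨ (j.val = 0 ∧ i.val = 2) ∨
                  (i.val = 1 ∧ j.val = 2) ∨ (j.val = 1 ∧ i.val = 2) ∨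
                  (2 ≤ i.val ∧ j.val = i.val + 1) ∨ (2 ≤ j.val ∧ i.val = j.val + 1) ∨
                  (i = j ∧ i.val = n) then (1:ℝ) else 0) * (if (j : ℕ) ≤ 1 then 1 else 2) = (if (j : ℕ) = 0 then (1:ℝ) else 0) + (if (j : ℕ) = 1 then (1:ℝ) else 0) + (if (j : ℕ) = 2 then (2:ℝ) else 0) := fun j => by
          have hj := j.isLt
          simp only [Fin.ext_iff]
          split_ifs <;> (try norm_num) <;> omega
        rw [Finset.sum_congr rfl fun j _ => hp j, Finset.sum_add_distrib, Finset.sum_add_distrib, sum_ite_fin 0 (by omega), sum_ite_fin 1 (by omega), sum_ite_fin 2 (by omega)]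
        norm_num
      · -- i = 2 < n
        have hp : ∀ j : Fin (n + 1), (if (i.val = 0 ∧ j.val = 2) ∨ (j.val = 0 ∧ i.val = 2) ∨
                  (i.val = 1 ∧ j.val = 2) ∨ (j.val = 1 ∧ i.val = 2) ∨
                  (2 ≤ i.val ∧ j.val = i.val + 1) ∨ (2 ≤ j.val ∧ i.val = j.val + 1) ∨
                  (i = j ∧ i.val = n) then (1:ℝ) else 0) * (if (j : ℕ) ≤ 1 then 1 else 2) = (if (j : ℕ) = 0 then (1:ℝ) else 0) + (if (j : ℕ) = 1 then (1:ℝ) else 0) + (if (j : ℕ) = 3 then (2:ℝ) else 0) := fun j => by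
          have hj := j.isLt
          simp only [Fin.ext_iff]
          split_ifs <;> (try norm_num) <;> omega
        rw [Finset.sum_congr rfl fun j _ => hp j, Finset.sum_add_distrib, Finset.sum_add_distrib, sum_ite_fin 0 (by omega), sum_ite_fin 1 (by omega), sum_ite_fin 3 (by omega)]
        norm_num
    · rcases lt_or_ge i.val n with h3 | h3
      · -- 2 < i < n
        have hp : ∀ j : Fin (n + 1), (if (i.val = 0 ∧ j.val = 2) ∨ (j.val = 0 ∧ i.val = 2) ∨
                  (i.val = 1 ∧ j.val = 2) ∨ (j.val = 1 ∧ i.val = 2) ∨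
                  (2 ≤ i.val ∧ j.val = i.val + 1) ∨ (2 ≤ j.val ∧ i.val = j.val + 1) ∨
                  (i = j ∧ i.val = n) then (1:ℝ) else 0) * (if (j : ℕ) ≤ 1 then 1 else 2) = (if (j : ℕ) = i.val - 1 then (2:ℝ) else 0) + (if (j : ℕ) = i.val + 1 then (2:ℝ) else 0) := fun j => by
          have hj := j.isLt
          simp only [Fin.ext_iff]
          split_ifs <;> (try norm_num) <;> omega
        rw [Finset.sum_congr rfl fun j _ => hp j, Finset.sum_add_distrib, sum_ite_fin (i.val - 1) (by omega), sum_ite_fin (i.val + 1) (by omega)]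
        norm_num
      · -- i = n
        have hp : ∀ j : Fin (n + 1), (if (i.val = 0 ∧ j.val = 2) ∨ (j.val = 0 ∧ i.val = 2) ∨
                  (i.val = 1 ∧ j.val = 2) ∨ (j.val = 1 ∧ i.val = 2) ∨
                  (2 ≤ i.val ∧ j.val = i.val + 1) ∨ (2 ≤ j.val ∧ i.val = j.val + 1) ∨
                  (i = j ∧ i.val = n) then (1:ℝ) else 0) * (if (j : ℕ) ≤ 1 then 1 else 2) = (if (j : ℕ) = n - 1 then (2:ℝ) else 0) + (if (j : ℕ) = n then (2:ℝ) else 0) := fun j => by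
          have hj := j.isLt
          simp only [Fin.ext_iff]
          split_ifs <;> (try norm_num) <;> omega
        rw [Finset.sum_congr rfl fun j _ => hp j, Finset.sum_add_distrib, sum_ite_fin (n - 1) (by omega), sum_ite_fin n (by omega)]
        norm_num

/-- The adjacency matrix of the graph `DL̃_n` (for `n ≥ 2`) has spectral radius `2`.
The graph `DL̃_n` has vertices `0, 1, …, n`, with vertices `0` and `1` each joined by an
edge to vertex `2`, edges between consecutive vertices `k` and `k + 1` for
`2 ≤ k ≤ n - 1`, and a loop at vertex `n`. -/
theorem spectralRadius_DLtilde_eq_two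
    (n : ℕ) (hn : 2 ≤ n)
    (Q : Matrix (Fin (n + 1)) (Fin (n + 1)) ℂ)
    (hQ : ∀ i j : Fin (n + 1), Q i j =
      if (i.val = 0 ∧ j.val = 2) ∨ (j.val = 0 ∧ i.val = 2) ∨
         (i.val = 1 ∧ j.val = 2) ∨ (j.val = 1 ∧ i.val = 2) ∨
         (2 ≤ i.val ∧ j.val = i.val + 1) ∨ (2 ≤ j.val ∧ i.val = j.val + 1) ∨
         (i = j ∧ i.val = n)
      then 1 else 0) :
    spectralRadius ℂ Q = 2 := by
  classical
  set vR : Fin (n + 1) → ℝ := fun j => if (j : ℕ) ≤ 1 then 1 else 2 with hvR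
  have hvpos : ∀ j, 0 < vR j := fun j => by
    simp only [hvR]; split_ifs <;> norm_num
  have key' : ∀ i : Fin (n + 1),
      ∑ j : Fin (n + 1),
        (if (i.val = 0 ∧ j.val = 2) ∨ (j.val = 0 ∧ i.val = 2) ∨
         (i.val = 1 ∧ j.val = 2) ∨ (j.val = 1 ∧ i.val = 2) ∨
         (2 ≤ i.val ∧ j.val = i.val + 1) ∨ (2 ≤ j.val ∧ i.val = j.val + 1) ∨
         (i = j ∧ i.val = n) then (1:ℝ) else 0) * vR j = 2 * vR i := fun i => key n hn i
  -- the complex Perron vector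
  set vC : Fin (n + 1) → ℂ := fun j => ((vR j : ℝ) : ℂ) with hvC
  have hvC0 : vC ≠ 0 := by
    intro hzero
    have h0 : vC 0 = 0 := congrFun hzero 0
    have : vR 0 ≠ 0 := ne_of_gt (hvpos 0)
    simp only [hvC, Complex.ofReal_eq_zero] at h0
    exact this h0
  have hmulQ : ∀ (x : Fin (n + 1) → ℂ) (i : Fin (n + 1)),
      Q.mulVec x i = ∑ j, Q i j * x j := fun x i => rfl
  have heigen : Q.mulVec vC = (2 : ℂ) • vC := by
    funext i
    rw [hmulQ]
    have hterm : ∀ j : Fin (n + 1), Q i j * vC j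
        = (((if (i.val = 0 ∧ j.val = 2) ∨ (j.val = 0 ∧ i.val = 2) ∨
         (i.val = 1 ∧ j.val = 2) ∨ (j.val = 1 ∧ i.val = 2) ∨
         (2 ≤ i.val ∧ j.val = i.val + 1) ∨ (2 ≤ j.val ∧ i.val = j.val + 1) ∨
         (i = j ∧ i.val = n) then (1:ℝ) else 0) * vR j : ℝ) : ℂ) := fun j => by
      rw [hQ]; simp only [hvC]; push_cast; split_ifs <;> simp
    rw [Finset.sum_congr rfl fun j _ => hterm j, ← Complex.ofReal_sum, key' i]
    simp only [Pi.smul_apply, hvC, smul_eq_mul]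
    push_cast
    ring
  -- membership of 2 in the spectrum
  have h2mem : (2 : ℂ) ∈ spectrum ℂ Q := by
    rw [spectrum.mem_iff]
    intro hunit
    rw [Matrix.isUnit_iff_isUnit_det] at hunit
    have hdet : (algebraMap ℂ (Matrix (Fin (n+1)) (Fin (n+1)) ℂ) 2 - Q).det = 0 := by
      rw [← Matrix.exists_mulVec_eq_zero_iff]
      refine ⟨vC, hvC0, ?_⟩
      rw [Matrix.sub_mulVec, Algebra.algebraMap_eq_smul_one, Matrix.smul_mulVec,
        Matrix.one_mulVec, heigen, sub_self]
    rw [hdet] at hunit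
    exact hunit.ne_zero rfl
  -- upper bound for any spectral value
  have hupper : ∀ μ ∈ spectrum ℂ Q, ‖μ‖ ≤ 2 := by
    intro μ hμ
    rw [spectrum.mem_iff, Matrix.isUnit_iff_isUnit_det, isUnit_iff_ne_zero, not_not] at hμ
    obtain ⟨x, hx0, hxe⟩ := (Matrix.exists_mulVec_eq_zero_iff).mpr hμ
    have hQx : Q.mulVec x = μ • x := by
      rw [Matrix.sub_mulVec, Algebra.algebraMap_eq_smul_one, Matrix.smul_mulVec,
        Matrix.one_mulVec, sub_eq_zero] at hxe
      exact hxe.symm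
    obtain ⟨i₀, -, hmax⟩ := Finset.exists_max_image Finset.univ
      (fun j => ‖x j‖ / vR j) ⟨0, Finset.mem_univ 0⟩
    have hmax' : ∀ j, ‖x j‖ / vR j ≤ ‖x i₀‖ / vR i₀ := fun j => hmax j (Finset.mem_univ j)
    have hpos : 0 < ‖x i₀‖ := by
      obtain ⟨k, hk⟩ := Function.ne_iff.mp hx0
      have h1 : 0 < ‖x k‖ / vR k := div_pos (norm_pos_iff.mpr hk) (hvpos k)
      have h2 : 0 < ‖x i₀‖ / vR i₀ := lt_of_lt_of_le h1 (hmax' k)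
      have h3 := mul_pos h2 (hvpos i₀)
      rwa [div_mul_cancel₀ _ (ne_of_gt (hvpos i₀))] at h3
    have hbound : ∀ j, ‖x j‖ ≤ vR j * (‖x i₀‖ / vR i₀) := fun j => by
      have := (div_le_iff₀ (hvpos j)).mp (hmax' j)
      linarith [this]
    have hkey : ‖μ‖ * ‖x i₀‖ ≤ 2 * ‖x i₀‖ := by
      have heig : ∑ j, Q i₀ j * x j = μ * x i₀ := by
        rw [← hmulQ, hQx]; simp
      calc ‖μ‖ * ‖x i₀‖ = ‖μ * x i₀‖ := (norm_mul _ _).symm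
        _ = ‖∑ j, Q i₀ j * x j‖ := by rw [heig]
        _ ≤ ∑ j, ‖Q i₀ j * x j‖ := norm_sum_le _ _
        _ = ∑ j, (if (i₀.val = 0 ∧ j.val = 2) ∨ (j.val = 0 ∧ i₀.val = 2) ∨
         (i₀.val = 1 ∧ j.val = 2) ∨ (j.val = 1 ∧ i₀.val = 2) ∨
         (2 ≤ i₀.val ∧ j.val = i₀.val + 1) ∨ (2 ≤ j.val ∧ i₀.val = j.val + 1) ∨
         (i₀ = j ∧ i₀.val = n) then (1:ℝ) else 0) * ‖x j‖ := by
            refine Finset.sum_congr rfl fun j _ => ?_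
            rw [norm_mul, hQ]
            split_ifs <;> simp
        _ ≤ ∑ j, (if (i₀.val = 0 ∧ j.val = 2) ∨ (j.val = 0 ∧ i₀.val = 2) ∨
         (i₀.val = 1 ∧ j.val = 2) ∨ (j.val = 1 ∧ i₀.val = 2) ∨
         (2 ≤ i₀.val ∧ j.val = i₀.val + 1) ∨ (2 ≤ j.val ∧ i₀.val = j.val + 1) ∨
         (i₀ = j ∧ i₀.val = n) then (1:ℝ) else 0) * (vR j * (‖x i₀‖ / vR i₀)) := by
            refine Finset.sum_le_sum fun j _ => ?_
            refine mul_le_mul_of_nonneg_left (hbound j) ?_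
            split_ifs <;> norm_num
        _ = (∑ j, (if (i₀.val = 0 ∧ j.val = 2) ∨ (j.val = 0 ∧ i₀.val = 2) ∨
         (i₀.val = 1 ∧ j.val = 2) ∨ (j.val = 1 ∧ i₀.val = 2) ∨
         (2 ≤ i₀.val ∧ j.val = i₀.val + 1) ∨ (2 ≤ j.val ∧ i₀.val = j.val + 1) ∨
         (i₀ = j ∧ i₀.val = n) then (1:ℝ) else 0) * vR j) * (‖x i₀‖ / vR i₀) := by
            rw [Finset.sum_mul]
            refine Finset.sum_congr rfl fun j _ => ?_
            ring
        _ = 2 * vR i₀ * (‖x i₀‖ / vR i₀) := by rw [key' i₀]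
        _ = 2 * ‖x i₀‖ := by
            rw [mul_assoc, mul_comm (vR i₀), div_mul_cancel₀ _ (ne_of_gt (hvpos i₀))]
    exact le_of_mul_le_mul_right hkey hpos
  -- assemble
  refine le_antisymm ?_ ?_
  · refine iSup₂_le fun μ hμ => ?_
    have h1 : ‖μ‖₊ ≤ (2 : NNReal) := by
      have := hupper μ hμ
      exact_mod_cast this
    exact_mod_cast ENNReal.coe_le_coe.mpr h1
  · have h := le_iSup₂ (f := fun (μ : ℂ) (_ : μ ∈ spectrum ℂ Q) => (‖μ‖₊ : ENNReal)) 2 h2mem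
    simpa [spectralRadius] using h
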